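/- Let f : 2^S → ℝ be z-indexable and let x be a mixed Hider strategy with one target. Then any search σ that searches the locations in non-increasing order of the index x_i/z_i (i.e. x_{σ(1)}/z_{σ(1)} ≥ x_{σ(2)}/z_{σ(2)} ≥ … ≥ x_{σ(n)}/z_{σ(n)}) maximizes the expected payoff: for every search τ, P(x,τ) ≤ P(x,σ). -/

import Mathlib

/-- The set of the first `i+1` locations searched (positions `0,…,i`) under the search `σ`. -/
def searched {n : ℕ} (σ : Equiv.Perm (Fin n)) (i : Fin n) : Finset (Fin n) :=
  (Finset.univ.filter (fun t : Fin n => t ≤ i)).image σ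

/-- The expected payoff `P(x,σ) = Σ_i x_{σ(i)} f(S^σ_i)`. -/
def pay {n : ℕ} (f : Finset (Fin n) → ℝ) (x : Fin n → ℝ) (σ : Equiv.Perm (Fin n)) : ℝ :=
  ∑ i : Fin n, x (σ i) * f (searched σ i)

/-- `f` is `z`-indexable. -/
def ZIndexable {n : ℕ} (f : Finset (Fin n) → ℝ) (z : Fin n → ℝ) : Prop :=
  (∀ r : Fin n, 0 < z r) ∧
  (∀ A : Finset (Fin n), 0 < f A) ∧
  (∀ A B : Finset (Fin n), B ⊂ A → f A < f B) ∧
  (∀ (A : Finset (Fin n)) (i j : Fin n), i ≠ j → i ∉ A → j ∉ A →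
    (f (insert i (insert j A)) - f (insert j A)) /
      (f (insert j (insert i A)) - f (insert i A)) = z i / z j)

namespace SearchAux

/-- number of inversions of `g`. -/
def invc {n : ℕ} (g : Fin n → Fin n) : ℕ :=
  ((Finset.univ : Finset (Fin n × Fin n)).filter (fun p => p.1 < p.2 ∧ g p.2 < g p.1)).card

lemma swap_val {n : ℕ} (a b u : Fin n) :
    ((Equiv.swap a b u : Fin n) : ℕ) = if u = a then (b : ℕ) else if u = b then (a : ℕ) else u := by
  rw [Equiv.swap_apply_def]; split_ifs <;> rfl

lemma swap_lt {n : ℕ} {a b s t : Fin n} (hab : (a : ℕ) + 1 = b) (hst : s < t)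
    (hne : ¬(s = a ∧ t = b)) : Equiv.swap a b s < Equiv.swap a b t := by
  have h1 := swap_val a b s
  have h2 := swap_val a b t
  rw [Fin.lt_def, h1, h2]
  rw [Fin.lt_def] at hst
  simp only [Fin.ext_iff] at hne ⊢
  split_ifs with g1 g2 g3 g4 <;> simp only [Fin.ext_iff] at * <;> omega

lemma swap_le_iff {n : ℕ} {a b i : Fin n} (hab : (a : ℕ) + 1 = b) (hia : i ≠ a) (u : Fin n) :
    Equiv.swap a b u ≤ i ↔ u ≤ i := by
  have h1 := swap_val a b u
  rw [Fin.le_def, h1, Fin.le_def]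
  have hia' : (i : ℕ) ≠ a := fun h => hia (Fin.ext h)
  split_ifs with g1 g2 <;> simp only [Fin.ext_iff] at * <;> omega

lemma invc_swap {n : ℕ} (g : Fin n → Fin n) {a b : Fin n}
    (hab : (a : ℕ) + 1 = b) (hinv : g b < g a) :
    invc (fun i => g (Equiv.swap a b i)) + 1 = invc g := by
  classical
  have hablt : a < b := by rw [Fin.lt_def]; omega
  set S : Finset (Fin n × Fin n) :=
    (Finset.univ : Finset (Fin n × Fin n)).filter (fun p => p.1 < p.2 ∧ g p.2 < g p.1) with hS
  have habS : (a, b) ∈ S := by simp [hS, hablt, hinv]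
  have key : invc (fun i => g (Equiv.swap a b i)) = (S.erase (a, b)).card := by
    apply Finset.card_equiv ((Equiv.swap a b).prodCongr (Equiv.swap a b))
    intro p
    simp only [invc, Finset.mem_filter, Finset.mem_univ, true_and, Finset.mem_erase, hS,
      Equiv.prodCongr_apply, Prod.map]
    constructor
    · rintro ⟨hlt, hgg⟩
      have hpne : ¬(p.1 = a ∧ p.2 = b) := by
        rintro ⟨h1, h2⟩
        rw [h1, h2] at hgg
        simp only [Equiv.swap_apply_left, Equiv.swap_apply_right] at hgg
        exact absurd hinv (asymm hgg)
      refine ⟨?_, swap_lt hab hlt hpne, hgg⟩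
      intro hc
      have hc1 : Equiv.swap a b p.1 = a := congrArg Prod.fst hc
      have hc2 : Equiv.swap a b p.2 = b := congrArg Prod.snd hc
      have : p.1 = b := by
        have := congrArg (Equiv.swap a b) hc1
        simpa [Equiv.swap_apply_self, Equiv.swap_apply_left] using this
      have h2 : p.2 = a := by
        have := congrArg (Equiv.swap a b) hc2
        simpa [Equiv.swap_apply_self, Equiv.swap_apply_right] using this
      rw [this, h2] at hlt
      exact absurd hablt (asymm hlt)
    · rintro ⟨hne, hlt, hgg⟩
      have hpne : ¬(Equiv.swap a b p.1 = a ∧ Equiv.swap a b p.2 = b) := by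
        rintro ⟨h1, h2⟩
        exact hne (Prod.ext h1 h2)
      have := swap_lt hab hlt hpne
      simp only [Equiv.swap_apply_self] at this
      exact ⟨this, hgg⟩
  have hgS : invc g = S.card := rfl
  rw [key, Finset.card_erase_of_mem habS, hgS]
  have : 0 < S.card := Finset.card_pos.mpr ⟨_, habS⟩
  omega

lemma searched_swap_ne {n : ℕ} (τ : Equiv.Perm (Fin n)) {a b i : Fin n}
    (hab : (a : ℕ) + 1 = b) (hia : i ≠ a) :
    searched (τ * Equiv.swap a b) i = searched τ i := by
  classical
  unfold searched
  ext u
  simp only [Finset.mem_image, Finset.mem_filter, Finset.mem_univ, true_and,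
    Equiv.Perm.mul_apply]
  constructor
  · rintro ⟨v, hv, rfl⟩
    exact ⟨Equiv.swap a b v, (swap_le_iff hab hia v).mpr hv, rfl⟩
  · rintro ⟨v, hv, rfl⟩
    refine ⟨Equiv.swap a b v, ?_, by simp [Equiv.swap_apply_self]⟩
    exact (swap_le_iff hab hia _).mpr hv

lemma pay_swap {n : ℕ} (f : Finset (Fin n) → ℝ) (z : Fin n → ℝ) (x : Fin n → ℝ)
    (hf : ZIndexable f z) (hx : ∀ i, 0 ≤ x i)
    (τ : Equiv.Perm (Fin n)) {a b : Fin n} (hab : (a : ℕ) + 1 = b)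
    (hkey : x (τ a) / z (τ a) ≤ x (τ b) / z (τ b)) :
    pay f x τ ≤ pay f x (τ * Equiv.swap a b) := by
  classical
  obtain ⟨hz, hfpos, hfmono, hfratio⟩ := hf
  set τ' := τ * Equiv.swap a b with hτ'
  have hba : a ≠ b := fun h => by rw [h] at hab; omega
  have hablt : a < b := by rw [Fin.lt_def]; omega
  set A : Finset (Fin n) := (Finset.univ.filter (fun t : Fin n => t < a)).image τ with hA
  set i := τ a with hi
  set j := τ b with hj
  have hij : i ≠ j := fun h => hba (τ.injective h)
  have hiA : i ∉ A := by
    simp only [hA, Finset.mem_image, Finset.mem_filter, Finset.mem_univ, true_and]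
    rintro ⟨v, hv, hvi⟩
    exact absurd (τ.injective hvi) (ne_of_lt hv)
  have hjA : j ∉ A := by
    simp only [hA, Finset.mem_image, Finset.mem_filter, Finset.mem_univ, true_and]
    rintro ⟨v, hv, hvj⟩
    have : v = b := τ.injective hvj
    rw [this] at hv
    exact absurd hablt (asymm hv)
  -- the filter sets
  have hfla : (Finset.univ.filter (fun t : Fin n => t ≤ a)) =
      insert a (Finset.univ.filter (fun t : Fin n => t < a)) := by
    ext u
    simp only [Finset.mem_filter, Finset.mem_univ, true_and, Finset.mem_insert]
    rw [le_iff_lt_or_eq]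
    tauto
  have hflb : (Finset.univ.filter (fun t : Fin n => t ≤ b)) =
      insert b (Finset.univ.filter (fun t : Fin n => t ≤ a)) := by
    ext u
    simp only [Finset.mem_filter, Finset.mem_univ, true_and, Finset.mem_insert,
      Fin.le_def, Fin.ext_iff]
    omega
  have hAτ' : (Finset.univ.filter (fun t : Fin n => t < a)).image (τ' : Fin n → Fin n) = A := by
    rw [hA]
    apply Finset.image_congr
    intro v hv
    simp only [Finset.coe_filter, Set.mem_setOf_eq, Finset.mem_univ, true_and] at hv
    have hva : v ≠ a := ne_of_lt hv
    have hvb : v ≠ b := ne_of_lt (lt_trans hv hablt)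
    simp [hτ', Equiv.Perm.mul_apply, Equiv.swap_apply_of_ne_of_ne hva hvb]
  have hsa : searched τ a = insert i A := by
    rw [searched, hfla, Finset.image_insert, hA, hi]
  have hsa' : searched τ' a = insert j A := by
    rw [searched, hfla, Finset.image_insert, hAτ', hj]
    congr 1
    simp [hτ', Equiv.Perm.mul_apply, Equiv.swap_apply_left]
  have hsb : searched τ b = insert j (insert i A) := by
    rw [searched, hflb, Finset.image_insert, ← searched, hsa, hj]
  have hsb' : searched τ' b = insert j (insert i A) := by
    rw [searched_swap_ne τ hab (by exact fun h => hba h.symm), hsb]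
  -- pay difference
  rw [← sub_nonneg, pay, pay, ← Finset.sum_sub_distrib]
  have hzero : ∀ c ∈ Finset.univ, c ∉ ({a, b} : Finset (Fin n)) →
      x (τ' c) * f (searched τ' c) - x (τ c) * f (searched τ c) = 0 := by
    intro c _ hc
    simp only [Finset.mem_insert, Finset.mem_singleton, not_or] at hc
    have h1 : searched τ' c = searched τ c := searched_swap_ne τ hab hc.1
    have h2 : τ' c = τ c := by
      simp [hτ', Equiv.Perm.mul_apply, Equiv.swap_apply_of_ne_of_ne hc.1 hc.2]
    rw [h1, h2, sub_self]
  rw [← Finset.sum_subset (Finset.subset_univ ({a, b} : Finset (Fin n))) hzero]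
  rw [Finset.sum_pair hba]
  have hτ'a : τ' a = j := by simp [hτ', Equiv.Perm.mul_apply, Equiv.swap_apply_left, hj]
  have hτ'b : τ' b = i := by simp [hτ', Equiv.Perm.mul_apply, Equiv.swap_apply_right, hi]
  rw [hτ'a, hτ'b, hsa, hsa', hsb, hsb', ← hi, ← hj]
  set B := insert j (insert i A) with hB
  set a' := f (insert i A) - f B with ha'
  set b' := f (insert j A) - f B with hb'
  have ha'pos : 0 < a' := by
    rw [ha']
    have : insert i A ⊂ B := by
      rw [hB]
      exact Finset.ssubset_insert (by simp [Finset.mem_insert, hjA, hij.symm])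
    linarith [hfmono B (insert i A) this]
  have hb'pos : 0 < b' := by
    rw [hb']
    have : insert j A ⊂ B := by
      rw [hB, Finset.insert_comm]
      exact Finset.ssubset_insert (by simp [Finset.mem_insert, hiA, hij])
    linarith [hfmono B (insert j A) this]
  have hratio := hfratio A i j hij hiA hjA
  rw [Finset.insert_comm] at hratio
  -- hratio : (f B - f (insert j A)) / (f B - f (insert i A)) = z i / z j
  have hzi := hz i
  have hzj := hz j
  have hb'eq : b' = z i / z j * a' := by
    have h1 : (f B - f (insert j A)) = -b' := by rw [hb']; ring
    have h2 : (f B - f (insert i A)) = -a' := by rw [ha']; ring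
    rw [h1, h2, neg_div_neg_eq] at hratio
    field_simp at hratio ⊢
    linarith [hratio]
  have hexp : x j * (z i / z j * a') - x i * a' = (a' * z i) * (x j / z j - x i / z i) := by
    field_simp
  have hd : 0 ≤ x j / z j - x i / z i := by linarith [hkey]
  have h3 : 0 ≤ x j * b' - x i * a' := by
    rw [hb'eq, hexp]
    exact mul_nonneg (by positivity) hd
  have hgoal2 : x j * f (insert j A) - x i * f (insert i A) + (x i * f B - x j * f B)
      = x j * b' - x i * a' := by rw [ha', hb']; ring
  linarith [h3, hgoal2]


end SearchAux

open SearchAux in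
/-- any search in non-increasing order of the index `x_i/z_i`
maximizes the expected payoff. -/
theorem searching_in_nonincreasing_index_order_is_optimal
    {n : ℕ} (f : Finset (Fin n) → ℝ) (z : Fin n → ℝ) (x : Fin n → ℝ)
    (hf : ZIndexable f z)
    (hx : ∀ i, 0 ≤ x i) (hxsum : ∑ i, x i = 1)
    (σ : Equiv.Perm (Fin n))
    (hσ : ∀ s t : Fin n, s ≤ t → x (σ t) / z (σ t) ≤ x (σ s) / z (σ s)) :
    ∀ τ : Equiv.Perm (Fin n), pay f x τ ≤ pay f x σ := by
  classical
  suffices H : ∀ N : ℕ, ∀ τ : Equiv.Perm (Fin n),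
      invc (fun i => σ.symm (τ i)) = N → pay f x τ ≤ pay f x σ by
    intro τ; exact H _ τ rfl
  intro N
  induction N using Nat.strong_induction_on with
  | _ N ih =>
    intro τ hN
    set g : Fin n → Fin n := fun i => σ.symm (τ i) with hg
    by_cases h0 : ∃ k, ∃ h2 : k + 1 < n, g ⟨k + 1, h2⟩ < g ⟨k, Nat.lt_of_succ_lt h2⟩
    · -- adjacent inversion: swap it
      obtain ⟨k, h2, hadj⟩ := h0
      set a : Fin n := ⟨k, Nat.lt_of_succ_lt h2⟩ with ha
      set b : Fin n := ⟨k + 1, h2⟩ with hbdef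
      have hab : (a : ℕ) + 1 = b := rfl
      have hkey : x (τ a) / z (τ a) ≤ x (τ b) / z (τ b) := by
        have := hσ (g b) (g a) (le_of_lt hadj)
        simpa [hg, Equiv.apply_symm_apply] using this
      have hstep := pay_swap f z x hf hx τ hab hkey
      have hsymm : (fun i => σ.symm ((τ * Equiv.swap a b) i))
          = fun i => g (Equiv.swap a b i) := rfl
      have hinvc := invc_swap g hab hadj
      have hlt : invc (fun i => g (Equiv.swap a b i)) < N := by omega
      have := ih _ hlt (τ * Equiv.swap a b) (by rw [hsymm])
      linarith
    · -- no adjacent inversion: g is monotone, hence τ = σ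
      push_neg at h0
      have hginj : Function.Injective g := fun u v huv => τ.injective (σ.symm.injective huv)
      have hmono : ∀ d : ℕ, ∀ s t : Fin n, (t : ℕ) = (s : ℕ) + d → g s ≤ g t := by
        intro d
        induction d with
        | zero =>
          intro s t h
          have hst : s = t := Fin.ext (by omega)
          rw [hst]
        | succ d ihd =>
          intro s t h
          have hlt' : (s : ℕ) + d < n := by omega
          have h1 : g s ≤ g ⟨(s : ℕ) + d, hlt'⟩ := ihd s ⟨(s : ℕ) + d, hlt'⟩ rfl
          have h3 : (s : ℕ) + d + 1 < n := by omega
          have h5 := h0 ((s : ℕ) + d) h3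
          have h4 : t = ⟨(s : ℕ) + d + 1, h3⟩ := Fin.ext (by simp; omega)
          rw [h4]
          exact le_trans h1 h5
      have hstrict : StrictMono g := by
        intro s t hst
        have h1 : g s ≤ g t := hmono ((t : ℕ) - (s : ℕ)) s t (by
          have := Fin.lt_def.mp hst; omega)
        have h2 : g s ≠ g t := fun h => (ne_of_lt hst) (hginj h)
        exact lt_of_le_of_ne h1 h2
      have hgid : g = id := by
        haveI : WellFoundedLT (Fin n) := inferInstance
        apply (hstrict.range_inj (strictMono_id : StrictMono (id : Fin n → Fin n))).1
        have hs1 : Function.Surjective g := fun u => ⟨τ.symm (σ u), by simp [hg]⟩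
        rw [hs1.range_eq, Set.range_id]
      have hτσ : τ = σ := by
        apply Equiv.ext
        intro u
        have h1 : g u = u := by rw [hgid]; rfl
        have h2 := congrArg σ h1
        rw [hg] at h2
        simpa [Equiv.apply_symm_apply] using h2
      rw [hτσ]
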